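/- Let G be a connected graph on n vertices, x a vertex of G with exactly three neighbors, y and z two distinct neighbors of x, and c ≥ 0 an integer; let G' be the associated terminal-augmented graph with terminals s and t. Then every st-path P in G' with |N_{G'}(V(P))| ≤ c satisfies V(G) ⊆ V(P). -/

import Mathlib

open SimpleGraph

/-- The open neighborhood of a vertex set `S`: vertices outside `S` adjacent to some
vertex of `S`. -/
def openNbhd {V : Type*} (G : SimpleGraph V) (S : Set V) : Set V :=
  {v | v ∉ S ∧ ∃ w ∈ S, G.Adj v w}

/-- The terminal-augmented graph `G'` of `(G, x, y, z, c)`: a new vertex `s`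
(modelled as `Sum.inr (Sum.inl ())`) adjacent exactly to `x`, a new vertex `t`
(modelled as `Sum.inr (Sum.inr (Sum.inl ()))`) adjacent exactly to `y` and `z`,
and `c` new vertices (the set `Z`, modelled as `Sum.inr (Sum.inr (Sum.inr i))`)
each adjacent exactly to `s`. -/
def termAug {V : Type*} (G : SimpleGraph V) (x y z : V) (c : ℕ) :
    SimpleGraph (V ⊕ (Unit ⊕ Unit ⊕ Fin c)) :=
  SimpleGraph.fromRel (fun a b =>
    match a, b with
    | Sum.inl v, Sum.inl w => G.Adj v w
    | Sum.inl v, Sum.inr (Sum.inl _) => v = x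
    | Sum.inl v, Sum.inr (Sum.inr (Sum.inl _)) => v = y ∨ v = z
    | Sum.inr (Sum.inl _), Sum.inr (Sum.inr (Sum.inr _)) => True
    | _, _ => False)

/-- The terminal `s` of the terminal-augmented graph. -/
def sVert (V : Type*) (c : ℕ) : V ⊕ (Unit ⊕ Unit ⊕ Fin c) := Sum.inr (Sum.inl ())

/-- The terminal `t` of the terminal-augmented graph. -/
def tVert (V : Type*) (c : ℕ) : V ⊕ (Unit ⊕ Unit ⊕ Fin c) := Sum.inr (Sum.inr (Sum.inl ()))

/-- `G` has a Hamiltonian cycle. -/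
def HasHamiltonianCycle {V : Type*} [DecidableEq V] (G : SimpleGraph V) : Prop :=
  ∃ (v : V) (p : G.Walk v v), p.IsHamiltonianCycle

lemma termAug_adj_Z {V : Type*} (G : SimpleGraph V) (x y z : V) (c : ℕ)
    (a : V ⊕ (Unit ⊕ Unit ⊕ Fin c)) (i : Fin c) :
    (termAug G x y z c).Adj a (Sum.inr (Sum.inr (Sum.inr i))) ↔ a = sVert V c := by
  rcases a with v | u | u | j <;>
    simp [termAug, fromRel_adj, sVert, Sum.inr.injEq, Fin.ext_iff]

lemma termAug_adj_s {V : Type*} (G : SimpleGraph V) (x y z : V) (c : ℕ) (v : V) :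
    (termAug G x y z c).Adj (Sum.inl v) (sVert V c) ↔ v = x := by
  simp [termAug, fromRel_adj, sVert]

lemma termAug_adj_inl {V : Type*} (G : SimpleGraph V) (x y z : V) (c : ℕ) (v w : V) :
    (termAug G x y z c).Adj (Sum.inl v) (Sum.inl w) ↔ G.Adj v w := by
  simp only [termAug, fromRel_adj]
  constructor
  · rintro ⟨h, h1 | h1⟩ <;> [exact h1; exact h1.symm]
  · intro h; exact ⟨fun e => by simp only [Sum.inl.injEq] at e; exact G.irrefl (e ▸ h),
      Or.inl h⟩


/-- Every `st`-path `P` in the terminal-augmented graph `G'` with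
`|N_{G'}(V(P))| ≤ c` satisfies `V(G) ⊆ V(P)`. -/
theorem stmt_5 {V : Type*} [Fintype V] (G : SimpleGraph V)
    (hG : G.Connected) (x y z : V) (hx : (G.neighborSet x).ncard = 3)
    (hy : G.Adj x y) (hz : G.Adj x z) (hyz : y ≠ z) (c : ℕ)
    (p : (termAug G x y z c).Walk (sVert V c) (tVert V c)) (hp : p.IsPath)
    (hnb : (openNbhd (termAug G x y z c) {a | a ∈ p.support}).ncard ≤ c) :
    ∀ v : V, Sum.inl v ∈ p.support := by
  classical
  -- Z vertices are not on the path
  have hZnot : ∀ i : Fin c,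
      (Sum.inr (Sum.inr (Sum.inr i)) : V ⊕ (Unit ⊕ Unit ⊕ Fin c)) ∉ p.support := by
    intro i hw
    have hwt : (Sum.inr (Sum.inr (Sum.inr i)) : V ⊕ (Unit ⊕ Unit ⊕ Fin c)) ≠ tVert V c := by
      simp [tVert]
    have hrnil : ¬ (p.dropUntil _ hw).Nil := SimpleGraph.Walk.not_nil_of_ne hwt
    have hadj := (p.dropUntil _ hw).adj_snd hrnil
    have h1 : (p.dropUntil _ hw).getVert 1 = sVert V c := by
      rw [← (termAug_adj_Z G x y z c ((p.dropUntil _ hw).getVert 1) i)]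
      exact hadj.symm
    have hsq : sVert V c ∈ (p.takeUntil _ hw).support := Walk.start_mem_support _
    have hrt : (p.dropUntil _ hw).getVert 1 ∈ (p.dropUntil _ hw).support.tail := by
      rw [← Walk.support_tail_of_not_nil _ hrnil]
      exact Walk.start_mem_support _
    have hnd : ((p.takeUntil _ hw).support ++ (p.dropUntil _ hw).support.tail).Nodup := by
      have h2 := hp.support_nodup
      rw [← p.take_spec hw, Walk.support_append] at h2
      exact h2
    rw [List.nodup_append] at hnd
    rw [h1] at hrt
    exact hnd.2.2 _ hsq _ hrt rfl
  have hsS : sVert V c ∈ p.support := p.start_mem_support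
  have hZmem : ∀ i : Fin c,
      (Sum.inr (Sum.inr (Sum.inr i)) : V ⊕ (Unit ⊕ Unit ⊕ Fin c)) ∈
        openNbhd (termAug G x y z c) {a | a ∈ p.support} := by
    intro i
    exact ⟨hZnot i, sVert V c, hsS, ((termAug_adj_Z G x y z c (sVert V c) i).mpr rfl).symm⟩
  -- key: no vertex of V is in the open neighborhood
  have hkey : ∀ v : V, (Sum.inl v : V ⊕ (Unit ⊕ Unit ⊕ Fin c)) ∉
      openNbhd (termAug G x y z c) {a | a ∈ p.support} := by
    intro v hv
    have hvZ : (Sum.inl v : V ⊕ (Unit ⊕ Unit ⊕ Fin c)) ∉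
        Set.range (fun i : Fin c => (Sum.inr (Sum.inr (Sum.inr i)) : V ⊕ (Unit ⊕ Unit ⊕ Fin c)))
        := by rintro ⟨i, hi⟩; exact Sum.inr_ne_inl hi
    have hsub : insert (Sum.inl v)
        (Set.range (fun i : Fin c => (Sum.inr (Sum.inr (Sum.inr i)) : V ⊕ (Unit ⊕ Unit ⊕ Fin c))))
        ⊆ openNbhd (termAug G x y z c) {a | a ∈ p.support} := by
      rintro a (rfl | ⟨i, rfl⟩)
      · exact hv
      · exact hZmem i
    have hZcard : (Set.range (fun i : Fin c =>
        (Sum.inr (Sum.inr (Sum.inr i)) : V ⊕ (Unit ⊕ Unit ⊕ Fin c)))).ncard = c := by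
      have hinj : Function.Injective (fun i : Fin c =>
          (Sum.inr (Sum.inr (Sum.inr i)) : V ⊕ (Unit ⊕ Unit ⊕ Fin c))) := by
        intro i j hij; simpa using hij
      rw [← Set.image_univ, Set.ncard_image_of_injective _ hinj, Set.ncard_univ]
      simp
    have hins := Set.ncard_insert_of_notMem hvZ (Set.toFinite _)
    have hle := Set.ncard_le_ncard hsub (Set.toFinite _)
    omega
  -- x is on the path
  have hxsup : (Sum.inl x : V ⊕ (Unit ⊕ Unit ⊕ Fin c)) ∈ p.support := by
    by_contra h
    exact hkey x ⟨h, sVert V c, hsS, (termAug_adj_s G x y z c x).mpr rfl⟩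
  -- propagate along edges of G
  have step : ∀ u w : V, (Sum.inl u : V ⊕ (Unit ⊕ Unit ⊕ Fin c)) ∈ p.support →
      G.Adj u w → (Sum.inl w : V ⊕ (Unit ⊕ Unit ⊕ Fin c)) ∈ p.support := by
    intro u w hu huw
    by_contra hwn
    exact hkey w ⟨hwn, Sum.inl u, hu, ((termAug_adj_inl G x y z c u w).mpr huw).symm⟩
  have walkstep : ∀ {u v : V}, G.Walk u v →
      (Sum.inl u : V ⊕ (Unit ⊕ Unit ⊕ Fin c)) ∈ p.support → Sum.inl v ∈ p.support := by
    intro u v w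
    induction w with
    | nil => exact id
    | cons h _ ih => intro hu; exact ih (step _ _ hu h)
  intro v
  obtain ⟨w⟩ := hG.preconnected x v
  exact walkstep w hxsup
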